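/- Suppose Y given X = x has CDF F(·,x) with density f(y,x) ≥ C_2 > 0 on its support, the smallest eigenvalue of E[X Xᵀ] is at least C_3 > 0, and γ*(u) minimizes γ ↦ E ρ_u(Y − Xᵀγ) over Γ with E[(F(Xᵀγ*(u), X) − u)X] = 0. Then for any γ ∈ Γ, E[ρ_u(Y − Xᵀγ)] − E[ρ_u(Y − Xᵀγ*(u))] ≥ (C_2 C_3 / 2) ‖γ − γ*(u)‖_2^2. -/

import Mathlib

open MeasureTheory ProbabilityTheory Set
open scoped RealInnerProductSpace

/-- The quantile-regression check function `ρ_u(a) = a (u − 1{a ≤ 0})`. -/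
noncomputable def checkFn (u a : ℝ) : ℝ := a * (u - if a ≤ 0 then 1 else 0)

/-- Quadratic growth of the population quantile-regression risk: if `Y` given `X = x`
has CDF `F(·,x)` with density bounded below by `C2 > 0` on its support
`[s1 x, s2 x]`, the smallest eigenvalue of `E[X Xᵀ]` is at least `C3 > 0`, and `γ*`
minimizes the population check-function risk over `Γ` with first-order condition
`E[(F(Xᵀγ*, X) − u) X] = 0`, then the risk gap at any `γ ∈ Γ` is at least
`(C2 C3 / 2) ‖γ − γ*‖²`. -/
lemma checkFn_eq (u y c : ℝ) : checkFn u (y - c) = u * (y - c) + max (c - y) 0 := by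
  unfold checkFn
  rcases le_or_gt (y - c) 0 with h | h
  · rw [if_pos h, max_eq_left (by linarith)]; ring
  · rw [if_neg (not_le.2 h), max_eq_right (by linarith)]; ring

section auxs
open Set
lemma aux_poly (x y b GA C2 : ℝ) :
    ∫ s in x..y, (GA + C2 * (s - b)) =
      (y - x) * GA + C2 * ((y ^ 2 - x ^ 2) / 2 - b * (y - x)) := by
  have h := intervalIntegral.integral_add
    (intervalIntegrable_const (c := GA) (a := x) (b := y) (μ := MeasureTheory.volume))
    (((intervalIntegral.intervalIntegrable_id (a := x) (b := y)).sub
      (intervalIntegrable_const (c := b))).const_mul C2)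
  rw [h, intervalIntegral.integral_const_mul,
    intervalIntegral.integral_sub intervalIntegral.intervalIntegrable_id
      (intervalIntegrable_const (c := b)),
    integral_id, intervalIntegral.integral_const, intervalIntegral.integral_const]
  simp only [smul_eq_mul]
  ring

lemma aux_L2 {C2 : ℝ} (G : ℝ → ℝ) (hmono : Monotone G) {p q a c : ℝ}
    (ha : a ∈ Icc p q) (hc : c ∈ Icc p q)
    (hd : ∀ y1 y2, y1 ∈ Icc p q → y2 ∈ Icc p q → y1 ≤ y2 → C2 * (y2 - y1) ≤ G y2 - G y1) :
    (c - a) * G a + C2 * (c - a) ^ 2 / 2 ≤ ∫ s in a..c, G s := by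
  have hGint : ∀ x y : ℝ, IntervalIntegrable G volume x y :=
    fun x y => (hmono.monotoneOn _).intervalIntegrable
  rcases le_total a c with hac | hca
  · have hmem : ∀ s ∈ Icc a c, s ∈ Icc p q := fun s hs =>
      ⟨ha.1.trans hs.1, hs.2.trans hc.2⟩
    have hpt : ∀ s ∈ Icc a c, G a + C2 * (s - a) ≤ G s := by
      intro s hs
      have := hd a s ha (hmem s hs) hs.1
      linarith
    calc (c - a) * G a + C2 * (c - a) ^ 2 / 2 = ∫ s in a..c, (G a + C2 * (s - a)) :=
        by rw [aux_poly a c a (G a) C2]; ring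
      _ ≤ ∫ s in a..c, G s := by
          apply intervalIntegral.integral_mono_on hac _ (hGint a c) hpt
          exact (intervalIntegrable_const).add
            (((intervalIntegral.intervalIntegrable_id).sub intervalIntegrable_const).const_mul C2)
  · have hmem : ∀ s ∈ Icc c a, s ∈ Icc p q := fun s hs =>
      ⟨hc.1.trans hs.1, hs.2.trans ha.2⟩
    have hpt : ∀ s ∈ Icc c a, G s ≤ G a + C2 * (s - a) := by
      intro s hs
      have := hd s a (hmem s hs) ha hs.2
      linarith
    have hle : ∫ s in c..a, G s ≤ ∫ s in c..a, (G a + C2 * (s - a)) := by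
      apply intervalIntegral.integral_mono_on hca (hGint c a) _ hpt
      exact (intervalIntegrable_const).add
        (((intervalIntegral.intervalIntegrable_id).sub intervalIntegrable_const).const_mul C2)
    rw [intervalIntegral.integral_symm c a]
    rw [aux_poly c a a (G a) C2] at hle
    nlinarith [hle]

lemma aux_L1' (ν : Measure ℝ) [IsProbabilityMeasure ν] {a c : ℝ} (hac : a ≤ c) :
    ∫ y, (max (c - y) 0 - max (a - y) 0) ∂ν = ∫ s in a..c, (ν (Iic s)).toReal := by
  have hmeasIic : Measurable fun s : ℝ => ν (Iic s) := by
    have hm : Monotone fun s : ℝ => ν (Iic s) := fun s t hst => measure_mono (Iic_subset_Iic.2 hst)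
    exact hm.measurable
  have hnn : ∀ y, 0 ≤ max (c - y) 0 - max (a - y) 0 := by
    intro y
    have : max (a - y) 0 ≤ max (c - y) 0 := max_le_max (by linarith) le_rfl
    linarith
  have hcont : Continuous fun y : ℝ => max (c - y) 0 - max (a - y) 0 := by fun_prop
  rw [integral_eq_lintegral_of_nonneg_ae (Filter.Eventually.of_forall hnn)
    hcont.aestronglyMeasurable]
  have hval : ∀ y : ℝ, ENNReal.ofReal (max (c - y) 0 - max (a - y) 0) =
      volume (Ioc a c ∩ Ici y) := by
    intro y
    rcases le_or_gt y a with h | h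
    · have h1 : Ioc a c ∩ Ici y = Ioc a c := inter_eq_left.2 fun s hs => h.trans hs.1.le
      rw [h1, Real.volume_Ioc, max_eq_left (sub_nonneg.2 (h.trans hac)),
        max_eq_left (sub_nonneg.2 h)]
      congr 1; ring
    · have h1 : Ioc a c ∩ Ici y = Icc y c := by
        ext s
        simp only [mem_inter_iff, mem_Ioc, mem_Ici, mem_Icc]
        constructor
        · rintro ⟨⟨_, h2⟩, h3⟩; exact ⟨h3, h2⟩
        · rintro ⟨h2, h3⟩; exact ⟨⟨h.trans_le h2, h3⟩, h2⟩
      rw [h1, Real.volume_Icc, max_eq_right (by linarith : a - y ≤ 0)]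
      rcases le_total (c - y) 0 with h2 | h2
      · rw [max_eq_right h2, ENNReal.ofReal_of_nonpos h2]
        simp
      · rw [max_eq_left h2]; norm_num
  simp_rw [hval]
  have hmeasset : MeasurableSet {p : ℝ × ℝ | p.1 ≤ p.2} :=
    measurableSet_le measurable_fst measurable_snd
  have h1 : ∀ y : ℝ, volume (Ioc a c ∩ Ici y)
      = ∫⁻ s, (Ici y).indicator (1 : ℝ → ENNReal) s ∂(volume.restrict (Ioc a c)) := by
    intro y
    rw [lintegral_indicator_one measurableSet_Ici,
      Measure.restrict_apply measurableSet_Ici, inter_comm]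
  simp_rw [h1]
  have hswap := lintegral_lintegral_swap (μ := ν) (ν := volume.restrict (Ioc a c))
    (f := fun y s => (Ici y).indicator (1 : ℝ → ENNReal) s) ?hmeas
  case hmeas =>
    have heq : Function.uncurry (fun y s => (Ici y).indicator (1 : ℝ → ENNReal) s)
        = {p : ℝ × ℝ | p.1 ≤ p.2}.indicator 1 := by
      funext p
      simp [Function.uncurry, Set.indicator_apply]
    rw [heq]
    exact (measurable_one.indicator hmeasset).aemeasurable
  rw [hswap]
  have h2 : ∀ s : ℝ, ∫⁻ y, (Ici y).indicator (1 : ℝ → ENNReal) s ∂ν = ν (Iic s) := by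
    intro s
    have : ∀ y : ℝ, (Ici y).indicator (1 : ℝ → ENNReal) s
        = (Iic s).indicator (1 : ℝ → ENNReal) y := by
      intro y; simp [Set.indicator_apply]
    simp_rw [this]
    rw [lintegral_indicator_one measurableSet_Iic]
  simp_rw [h2]
  rw [intervalIntegral.integral_of_le hac,
    integral_toReal (hmeasIic.aemeasurable.restrict)
      (Filter.Eventually.of_forall fun s => measure_lt_top ν _)]

lemma aux_L1 (ν : Measure ℝ) [IsProbabilityMeasure ν] (a c : ℝ) :
    ∫ y, (max (c - y) 0 - max (a - y) 0) ∂ν = ∫ s in a..c, (ν (Iic s)).toReal := by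
  rcases le_total a c with h | h
  · exact aux_L1' ν h
  · rw [show (fun y => max (c - y) 0 - max (a - y) 0)
        = fun y => -(max (a - y) 0 - max (c - y) 0) from funext fun y => by ring,
      integral_neg, aux_L1' ν h, ← intervalIntegral.integral_symm]
end auxs

theorem stmt17 {Ω : Type*} [MeasurableSpace Ω] (μ : Measure Ω) [IsProbabilityMeasure μ]
    (d : ℕ) (X : Ω → EuclideanSpace ℝ (Fin d)) (Y : Ω → ℝ)
    (hX : Measurable X) (hY : Measurable Y)
    (F : ℝ → EuclideanSpace ℝ (Fin d) → ℝ) (s1 s2 : EuclideanSpace ℝ (Fin d) → ℝ)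
    (u C2 C3 : ℝ) (hu : u ∈ Ioo (0:ℝ) 1) (hC2 : 0 < C2) (hC3 : 0 < C3)
    (Γ : Set (EuclideanSpace ℝ (Fin d))) (γstar : EuclideanSpace ℝ (Fin d))
    (hγstar : γstar ∈ Γ)
    -- F(·, x) is the conditional CDF of Y given X = x
    (hF : ∀ᵐ ω ∂μ, ∀ y : ℝ, (condDistrib Y X μ (X ω) (Iic y)).toReal = F y (X ω))
    -- density bounded below by C2 on the support
    (hdens : ∀ x, ∀ y1 y2 : ℝ, y1 ∈ Icc (s1 x) (s2 x) → y2 ∈ Icc (s1 x) (s2 x) →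
      y1 ≤ y2 → C2 * (y2 - y1) ≤ F y2 x - F y1 x)
    -- indices Xᵀγ stay in the support for γ ∈ Γ
    (hsupp : ∀ᵐ ω ∂μ, ∀ γ ∈ Γ, ⟪X ω, γ⟫ ∈ Icc (s1 (X ω)) (s2 (X ω)))
    -- smallest eigenvalue of E[X Xᵀ] bounded below by C3
    (heig : ∀ v : EuclideanSpace ℝ (Fin d), C3 * ‖v‖ ^ 2 ≤ ∫ ω, ⟪X ω, v⟫ ^ 2 ∂μ)
    -- integrability
    (hint : ∀ γ ∈ Γ, Integrable (fun ω => checkFn u (Y ω - ⟪X ω, γ⟫)) μ)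
    (hintX : Integrable X μ)
    -- γ* minimizes the population risk over Γ
    (hmin : ∀ γ ∈ Γ, ∫ ω, checkFn u (Y ω - ⟪X ω, γstar⟫) ∂μ
      ≤ ∫ ω, checkFn u (Y ω - ⟪X ω, γ⟫) ∂μ)
    -- first-order condition
    (horth : ∫ ω, (F (⟪X ω, γstar⟫) (X ω) - u) • X ω ∂μ = 0) :
    ∀ γ ∈ Γ, C2 * C3 / 2 * ‖γ - γstar‖ ^ 2
      ≤ ∫ ω, checkFn u (Y ω - ⟪X ω, γ⟫) ∂μ - ∫ ω, checkFn u (Y ω - ⟪X ω, γstar⟫) ∂μ := by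
  intro γ hγ
  set δ : EuclideanSpace ℝ (Fin d) := γ - γstar with hδ
  set t : Ω → ℝ := fun ω => ⟪X ω, γ⟫ - ⟪X ω, γstar⟫ with ht
  have htinner : ∀ ω, t ω = ⟪X ω, δ⟫ := fun ω => (inner_sub_right _ _ _).symm
  -- t measurable and integrable
  have hXconts : ∀ v : EuclideanSpace ℝ (Fin d), Continuous fun x : EuclideanSpace ℝ (Fin d) => (⟪x, v⟫ : ℝ) :=
    fun v => continuous_id.inner continuous_const
  have htmeas : Measurable t := by
    have : Continuous fun x : EuclideanSpace ℝ (Fin d) => (⟪x, γ⟫ : ℝ) - ⟪x, γstar⟫ := by fun_prop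
    exact this.measurable.comp hX
  have htint : Integrable t μ := by
    have h0 := (ContinuousLinearMap.integrable_comp (innerSL ℝ δ) hintX)
    have : (fun ω => (innerSL ℝ δ) (X ω)) = t := by
      funext ω
      simp only [innerSL_apply_apply]
      rw [htinner ω, real_inner_comm]
    rwa [this] at h0
  -- f and its properties
  set f : EuclideanSpace ℝ (Fin d) × ℝ → ℝ := fun p => max (⟪p.1, γ⟫ - p.2) 0 - max (⟪p.1, γstar⟫ - p.2) 0 with hf_def
  have hf_cont : Continuous f := by
    apply Continuous.sub
    · exact (((hXconts γ).comp continuous_fst).sub continuous_snd).max continuous_const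
    · exact (((hXconts γstar).comp continuous_fst).sub continuous_snd).max continuous_const
  have hD : ∀ ω, checkFn u (Y ω - ⟪X ω, γ⟫) - checkFn u (Y ω - ⟪X ω, γstar⟫)
      = f (X ω, Y ω) - u * t ω := by
    intro ω
    rw [checkFn_eq, checkFn_eq]
    simp only [hf_def, ht]
    ring
  have hf_comp : Integrable (fun ω => f (X ω, Y ω)) μ := by
    have heq : (fun ω => f (X ω, Y ω))
        = fun ω => (checkFn u (Y ω - ⟪X ω, γ⟫) - checkFn u (Y ω - ⟪X ω, γstar⟫)) + u * t ω := by
      funext ω; rw [hD ω]; ring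
    rw [heq]
    exact ((hint γ hγ).sub (hint γstar hγstar)).add (htint.const_mul u)
  -- conditional distribution step
  have hf_sm : StronglyMeasurable f := hf_cont.stronglyMeasurable
  have hEf : ∫ ω, f (X ω, Y ω) ∂μ
      = ∫ ω, ∫ y, f (X ω, y) ∂(condDistrib Y X μ (X ω)) ∂μ := by
    rw [← integral_condExp (hX.comap_le) (f := fun ω => f (X ω, Y ω)) (μ := μ)]
    exact integral_congr_ae
      (condExp_prod_ae_eq_integral_condDistrib hX hY.aemeasurable hf_sm hf_comp)
  set g : Ω → ℝ := fun ω => ∫ y, f (X ω, y) ∂(condDistrib Y X μ (X ω)) with hg_def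
  have hf_int_map : Integrable f (μ.map fun ω => (X ω, Y ω)) :=
    (integrable_map_measure hf_sm.aestronglyMeasurable
      (hX.aemeasurable.prodMk hY.aemeasurable)).2 hf_comp
  have hg_int : Integrable g μ :=
    hf_int_map.integral_condDistrib hX.aemeasurable hY.aemeasurable
  -- ψ : the conditional CDF evaluated at the index of γstar
  set ψ : Ω → ℝ := fun ω => (condDistrib Y X μ (X ω) (Iic (⟪X ω, γstar⟫))).toReal with hψ_def
  have hψm : Measurable ψ := by
    have hset : MeasurableSet {p : EuclideanSpace ℝ (Fin d) × ℝ | p.2 ≤ ⟪p.1, γstar⟫} :=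
      measurableSet_le measurable_snd ((hXconts γstar).measurable.comp measurable_fst)
    have h0 := ProbabilityTheory.Kernel.measurable_kernel_prodMk_left
      (κ := condDistrib Y X μ) hset
    have hpre : ∀ x : EuclideanSpace ℝ (Fin d), (Prod.mk x ⁻¹' {p : EuclideanSpace ℝ (Fin d) × ℝ | p.2 ≤ ⟪p.1, γstar⟫}) = Iic ⟪x, γstar⟫ := by
      intro x; ext y; simp [Set.mem_Iic]
    have h1 : Measurable fun x : EuclideanSpace ℝ (Fin d) => condDistrib Y X μ x (Iic ⟪x, γstar⟫) := by
      simpa only [hpre] using h0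
    exact ENNReal.measurable_toReal.comp (h1.comp hX)
  have hψ_bdd : ∀ ω, ψ ω ∈ Icc (0:ℝ) 1 := by
    intro ω
    constructor
    · exact ENNReal.toReal_nonneg
    · exact ENNReal.toReal_le_of_le_ofReal zero_le_one (by simpa using prob_le_one)
  have hψF : ψ =ᵐ[μ] fun ω => F (⟪X ω, γstar⟫) (X ω) := hF.mono fun ω h => h _
  -- orthogonality
  have hsint : Integrable (fun ω => (ψ ω - u) • X ω) μ := by
    apply Integrable.smul_of_top_right (φ := fun ω => ψ ω - u) hintX
    apply memLp_top_of_bound ((hψm.sub measurable_const).aestronglyMeasurable) (1 + |u|)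
    filter_upwards with ω
    rw [Real.norm_eq_abs, abs_le]
    simp only [Pi.sub_apply]
    constructor <;>
      nlinarith [le_abs_self u, neg_abs_le u, (hψ_bdd ω).1, (hψ_bdd ω).2]
  have horth' : ∫ ω, (ψ ω - u) * t ω ∂μ = 0 := by
    have h2 : ∫ ω, (⟪δ, (ψ ω - u) • X ω⟫ : ℝ) ∂μ = ⟪δ, ∫ ω, (ψ ω - u) • X ω ∂μ⟫ :=
      integral_inner hsint δ
    have h3 : ∫ ω, (ψ ω - u) • X ω ∂μ = ∫ ω, (F (⟪X ω, γstar⟫) (X ω) - u) • X ω ∂μ := by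
      apply integral_congr_ae
      filter_upwards [hψF] with ω h
      have h' : ψ ω = F (⟪X ω, γstar⟫) (X ω) := h
      rw [h']
    have h4 : (fun ω => (⟪δ, (ψ ω - u) • X ω⟫ : ℝ)) = fun ω => (ψ ω - u) * t ω := by
      funext ω
      rw [real_inner_smul_right, real_inner_comm, ← htinner ω]
    rw [← h4, h2, h3, horth, inner_zero_right]
  -- key pointwise a.e. inequality
  have hkey : ∀ᵐ ω ∂μ, t ω * ψ ω + C2 / 2 * (t ω) ^ 2 ≤ g ω := by
    filter_upwards [hF, hsupp] with ω hFω hsω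
    have hg : g ω = ∫ s in (⟪X ω, γstar⟫)..(⟪X ω, γ⟫), F s (X ω) := by
      rw [hg_def]
      have := aux_L1 (condDistrib Y X μ (X ω)) (⟪X ω, γstar⟫) (⟪X ω, γ⟫)
      simp only [hf_def]
      rw [this]
      apply intervalIntegral.integral_congr
      intro s _
      exact hFω s
    have hmono : Monotone fun s => F s (X ω) := by
      intro r1 r2 h12
      show F r1 (X ω) ≤ F r2 (X ω)
      rw [← hFω r1, ← hFω r2]
      exact ENNReal.toReal_mono (measure_ne_top _ _)
        (measure_mono (Iic_subset_Iic.2 h12))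
    have hL2 := aux_L2 (C2 := C2) (fun s => F s (X ω)) hmono
      (hsω γstar hγstar) (hsω γ hγ)
      (fun y1 y2 hy1 hy2 h12 => hdens (X ω) y1 y2 hy1 hy2 h12)
    rw [hg]
    have hψω : ψ ω = F (⟪X ω, γstar⟫) (X ω) := hFω _
    have htω : t ω = ⟪X ω, γ⟫ - ⟪X ω, γstar⟫ := rfl
    rw [hψω, htω]
    convert hL2 using 2 <;> ring
  -- integrability of t * ψ and t^2
  have htψint : Integrable (fun ω => t ω * ψ ω) μ := by
    have h0 := (ContinuousLinearMap.integrable_comp (innerSL ℝ δ) hsint)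
    have heq : (fun ω => (innerSL ℝ δ) ((ψ ω - u) • X ω)) = fun ω => (ψ ω - u) * t ω := by
      funext ω
      simp only [innerSL_apply_apply]
      rw [real_inner_smul_right, real_inner_comm, ← htinner ω]
    rw [heq] at h0
    have : (fun ω => t ω * ψ ω) = fun ω => ((ψ ω - u) * t ω) + u * t ω := by
      funext ω; ring
    rw [this]
    exact h0.add (htint.const_mul u)
  have hgψint : Integrable (fun ω => g ω - t ω * ψ ω) μ := hg_int.sub htψint
  have ht2int : Integrable (fun ω => C2 / 2 * (t ω) ^ 2) μ := by
    apply Integrable.mono' hgψint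
      (((htmeas.pow_const 2).const_mul (C2 / 2)).aestronglyMeasurable)
    filter_upwards [hkey] with ω h
    rw [Real.norm_eq_abs, abs_of_nonneg (by positivity)]
    linarith
  -- put everything together
  have e1 : ∫ ω, checkFn u (Y ω - ⟪X ω, γ⟫) ∂μ - ∫ ω, checkFn u (Y ω - ⟪X ω, γstar⟫) ∂μ
      = ∫ ω, f (X ω, Y ω) ∂μ - u * ∫ ω, t ω ∂μ := by
    rw [← integral_sub (hint γ hγ) (hint γstar hγstar)]
    have : (fun ω => checkFn u (Y ω - ⟪X ω, γ⟫) - checkFn u (Y ω - ⟪X ω, γstar⟫))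
        = fun ω => f (X ω, Y ω) - u * t ω := funext hD
    rw [this, integral_sub hf_comp (htint.const_mul u), integral_const_mul]
  have e4 : ∫ ω, t ω * ψ ω ∂μ = u * ∫ ω, t ω ∂μ := by
    have h5 : ∫ ω, ((ψ ω - u) * t ω) ∂μ = ∫ ω, t ω * ψ ω ∂μ - u * ∫ ω, t ω ∂μ := by
      have : (fun ω => (ψ ω - u) * t ω) = fun ω => t ω * ψ ω - u * t ω := by
        funext ω; ring
      rw [this, integral_sub htψint (htint.const_mul u), integral_const_mul]
    rw [horth'] at h5
    linarith
  have e3 : ∫ ω, t ω * ψ ω ∂μ + C2 / 2 * ∫ ω, (t ω) ^ 2 ∂μ ≤ ∫ ω, g ω ∂μ := by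
    have h6 := integral_mono_ae (htψint.add ht2int) hg_int hkey
    simp only [Pi.add_apply] at h6
    rw [integral_add htψint ht2int, integral_const_mul] at h6
    exact h6
  have e5 : C3 * ‖δ‖ ^ 2 ≤ ∫ ω, (t ω) ^ 2 ∂μ := by
    have := heig δ
    have heq : (fun ω => (⟪X ω, δ⟫ : ℝ) ^ 2) = fun ω => (t ω) ^ 2 := by
      funext ω; rw [htinner ω]
    rwa [heq] at this
  have ht2nonneg : 0 ≤ ∫ ω, (t ω) ^ 2 ∂μ := by
    apply integral_nonneg; intro ω; positivity
  rw [e1, hEf]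
  have : C2 * C3 / 2 * ‖δ‖ ^ 2 ≤ C2 / 2 * ∫ ω, (t ω) ^ 2 ∂μ := by
    have := mul_le_mul_of_nonneg_left e5 (le_of_lt (by positivity : (0:ℝ) < C2 / 2))
    nlinarith
  have hgoal : C2 / 2 * ∫ ω, (t ω) ^ 2 ∂μ ≤ (∫ ω, g ω ∂μ) - u * ∫ ω, t ω ∂μ := by
    linarith [e3, e4.symm.le]
  calc C2 * C3 / 2 * ‖γ - γstar‖ ^ 2 = C2 * C3 / 2 * ‖δ‖ ^ 2 := by rw [hδ]
    _ ≤ C2 / 2 * ∫ ω, (t ω) ^ 2 ∂μ := this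
    _ ≤ (∫ ω, g ω ∂μ) - u * ∫ ω, t ω ∂μ := hgoal
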